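/- Let G be a Garside group of finite type and x ∈ G. Then: (1) φ(x)ι(x) ≼ Δ if and only if 𝔭(x) = ι(x), and in this case 𝔰(x) = c(x); (2) Δ ≼ φ(x)ι(x) if and only if 𝔭(x) = ι(x⁻¹) = φ(x)⁻¹Δ, and in this case 𝔰(x) = τ(d(x)). -/

import Mathlib

namespace GarsidePaper

/-- A Garside structure of finite type on a group `G`: a positive submonoid `P` with
`P ∩ P⁻¹ = {1}`, a Garside element `Δ ∈ P`, the prefix order `a ≼ b ↔ a⁻¹b ∈ P`
a lattice order (with meet `wedge` and join `vee`), the simple elements `[1,Δ]`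
generating `G` and being finite, `Δ⁻¹PΔ = P`, a finite norm on positive elements,
and the infimum and supremum functions `inf`, `sup` characterised by
`Δ^(inf x) ≼ x ≼ Δ^(sup x)` with `inf x` maximal and `sup x` minimal. -/
structure Garside (G : Type*) [Group G] where
  P : Submonoid G
  Δ : G
  purity : ∀ a : G, a ∈ P → a⁻¹ ∈ P → a = 1
  delta_mem : Δ ∈ P
  wedge : G → G → G
  vee : G → G → G
  wedge_le_left : ∀ a b : G, (wedge a b)⁻¹ * a ∈ P
  wedge_le_right : ∀ a b : G, (wedge a b)⁻¹ * b ∈ P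
  le_wedge : ∀ a b c : G, c⁻¹ * a ∈ P → c⁻¹ * b ∈ P → c⁻¹ * wedge a b ∈ P
  le_vee_left : ∀ a b : G, a⁻¹ * vee a b ∈ P
  le_vee_right : ∀ a b : G, b⁻¹ * vee a b ∈ P
  vee_le : ∀ a b c : G, a⁻¹ * c ∈ P → b⁻¹ * c ∈ P → (vee a b)⁻¹ * c ∈ P
  simples_generate : Subgroup.closure {a : G | a ∈ P ∧ a⁻¹ * Δ ∈ P} = (⊤ : Subgroup G)
  conj_pos : ∀ a : G, a ∈ P → Δ⁻¹ * a * Δ ∈ P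
  norm : G → ℕ
  norm_exists : ∀ x : G, x ∈ P → x ≠ 1 →
    ∃ l : List G, (∀ s ∈ l, s ∈ P ∧ s ≠ 1) ∧ l.prod = x ∧ l.length = norm x
  norm_max : ∀ x : G, x ∈ P → x ≠ 1 →
    ∀ l : List G, (∀ s ∈ l, s ∈ P ∧ s ≠ 1) → l.prod = x → l.length ≤ norm x
  simples_finite : Set.Finite {a : G | a ∈ P ∧ a⁻¹ * Δ ∈ P}
  inf : G → ℤ
  sup : G → ℤ
  inf_le : ∀ x : G, (Δ ^ inf x)⁻¹ * x ∈ P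
  inf_max : ∀ (x : G) (p : ℤ), (Δ ^ p)⁻¹ * x ∈ P → p ≤ inf x
  le_sup : ∀ x : G, x⁻¹ * Δ ^ sup x ∈ P
  sup_min : ∀ (x : G) (q : ℤ), x⁻¹ * Δ ^ q ∈ P → sup x ≤ q

namespace Garside

variable {G : Type*} [Group G]

/-- The prefix order `a ≼ b`. -/
def le (S : Garside G) (a b : G) : Prop := a⁻¹ * b ∈ S.P

/-- The canonical length `ℓ(x) = sup(x) - inf(x)`. -/
def len (S : Garside G) (x : G) : ℤ := S.sup x - S.inf x

/-- The initial factor `ι(x) = (x Δ^(-inf x)) ∧ Δ`. -/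
def iota (S : Garside G) (x : G) : G := S.wedge (x * S.Δ ^ (-S.inf x)) S.Δ

/-- The preferred prefix `𝔭(x) = ι(x) ∧ ι(x⁻¹)`. -/
def pp (S : Garside G) (x : G) : G := S.wedge (S.iota x) (S.iota x⁻¹)

/-- Cyclic sliding `𝔰(x) = 𝔭(x)⁻¹ x 𝔭(x)`. -/
def sl (S : Garside G) (x : G) : G := (S.pp x)⁻¹ * x * S.pp x

/-- The final factor `φ(x) = (Δ^(sup x - 1) ∧ x)⁻¹ x`. -/
def phi (S : Garside G) (x : G) : G := (S.wedge (S.Δ ^ (S.sup x - 1)) x)⁻¹ * x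

/-- Conjugation by `Δ`: `τ(x) = Δ⁻¹ x Δ`. -/
def tau (S : Garside G) (x : G) : G := S.Δ⁻¹ * x * S.Δ

/-- Cycling `c(x) = ι(x)⁻¹ x ι(x)`. -/
def cyc (S : Garside G) (x : G) : G := (S.iota x)⁻¹ * x * S.iota x

/-- Decycling `d(x) = φ(x) x φ(x)⁻¹`. -/
def dec (S : Garside G) (x : G) : G := S.phi x * x * (S.phi x)⁻¹

/-- The transport `α^{(1)} = 𝔭(x)⁻¹ α 𝔭(x^α)` of `α` at `x`. -/
def transport (S : Garside G) (x α : G) : G := (S.pp x)⁻¹ * α * S.pp (α⁻¹ * x * α)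

/-- The iterated transport: `itTransport x i α = α^{(i)}`, the transport of `α^{(i-1)}`
at `𝔰^{i-1}(x)`, with `α^{(0)} = α`. -/
def itTransport (S : Garside G) (x : G) : ℕ → G → G
  | 0, α => α
  | i + 1, α => S.transport ((S.sl)^[i] x) (S.itTransport x i α)

/-- `𝔓_i(x) = 𝔭(x) 𝔭(𝔰(x)) ⋯ 𝔭(𝔰^{i-1}(x))`, with `𝔓₀(x) = 1`. -/
def PP (S : Garside G) (x : G) : ℕ → G
  | 0 => 1
  | i + 1 => S.PP x i * S.pp ((S.sl)^[i] x)

/-- The summit set `SS(x)`. -/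
def SS (S : Garside G) (x : G) : Set G :=
  {y | IsConj x y ∧ ∀ z : G, IsConj x z → S.inf z ≤ S.inf y}

/-- The super summit set `SSS(x)`. -/
def SSS (S : Garside G) (x : G) : Set G :=
  {y | IsConj x y ∧ (∀ z : G, IsConj x z → S.inf z ≤ S.inf y) ∧
       (∀ z : G, IsConj x z → S.sup y ≤ S.sup z)}

/-- The ultra summit set `USS(x)`. -/
def USS (S : Garside G) (x : G) : Set G :=
  {y | y ∈ S.SSS x ∧ ∃ m : ℕ, 1 ≤ m ∧ (S.cyc)^[m] y = y}

/-- The reduced super summit set `RSSS(x)`. -/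
def RSSS (S : Garside G) (x : G) : Set G :=
  {y | IsConj x y ∧ (∃ m : ℕ, 1 ≤ m ∧ (S.cyc)^[m] y = y) ∧
       (∃ n : ℕ, 1 ≤ n ∧ (S.dec)^[n] y = y)}

/-- The set of sliding circuits `SC(x)`. -/
def SC (S : Garside G) (x : G) : Set G :=
  {y | IsConj x y ∧ ∃ m : ℕ, 1 ≤ m ∧ (S.sl)^[m] y = y}

end Garside

namespace Garside

variable {G : Type*} [Group G]

/-- The set of simple elements. -/
def Simples (S : Garside G) : Set G := {a : G | a ∈ S.P ∧ a⁻¹ * S.Δ ∈ S.P}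

/-- The submonoid generated by the simple elements. -/
def M (S : Garside G) : Submonoid G := Submonoid.closure S.Simples

/-- Right gcd. -/
def rgcd (S : Garside G) (a b : G) : G := (S.vee a⁻¹ b⁻¹)⁻¹

/-- Right lcm. -/
def rlcm (S : Garside G) (a b : G) : G := (S.wedge a⁻¹ b⁻¹)⁻¹

variable (S : Garside G)

lemma eq_of_le_le {a b : G} (h1 : a⁻¹ * b ∈ S.P) (h2 : b⁻¹ * a ∈ S.P) : a = b := by
  have h3 : (a⁻¹ * b)⁻¹ ∈ S.P := by
    have e : (a⁻¹ * b)⁻¹ = b⁻¹ * a := by group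
    rw [e]; exact h2
  exact inv_mul_eq_one.mp (S.purity _ h1 h3)

lemma dd_mem {a : G} (ha : a ∈ S.Simples) : a⁻¹ * S.Δ ∈ S.Simples := by
  refine ⟨ha.2, ?_⟩
  have h := S.conj_pos a ha.1
  have e : (a⁻¹ * S.Δ)⁻¹ * S.Δ = S.Δ⁻¹ * a * S.Δ := by group
  rw [e]; exact h

lemma exists_dd_eq {b : G} (hb : b ∈ S.Simples) : ∃ a ∈ S.Simples, a⁻¹ * S.Δ = b := by
  classical
  have hfin : S.Simples.Finite := S.simples_finite
  set s : Finset G := hfin.toFinset with hs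
  have hmem : ∀ a : G, a ∈ s ↔ a ∈ S.Simples := by
    intro a; simp [hs, Set.Finite.mem_toFinset]
  have hinj : Function.Injective (fun a : G => a⁻¹ * S.Δ) := by
    intro x y hxy
    exact inv_injective (mul_right_cancel hxy)
  have hsub : Finset.image (fun a : G => a⁻¹ * S.Δ) s ⊆ s := by
    intro x hx
    simp only [Finset.mem_image] at hx
    obtain ⟨a, ha, rfl⟩ := hx
    exact (hmem _).mpr (S.dd_mem ((hmem _).mp ha))
  have hcard : s.card ≤ (Finset.image (fun a : G => a⁻¹ * S.Δ) s).card := by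
    rw [Finset.card_image_of_injective _ hinj]
  have himg : Finset.image (fun a : G => a⁻¹ * S.Δ) s = s :=
    Finset.eq_of_subset_of_card_le hsub hcard
  have hb' : b ∈ s := (hmem b).mpr hb
  rw [← himg] at hb'
  simp only [Finset.mem_image] at hb'
  obtain ⟨a, ha, hab⟩ := hb'
  exact ⟨a, (hmem a).mp ha, hab⟩

lemma deltaInv_mem {b : G} (hb : b ∈ S.Simples) : S.Δ * b⁻¹ ∈ S.Simples := by
  obtain ⟨a, ha, rfl⟩ := S.exists_dd_eq hb
  have e : S.Δ * (a⁻¹ * S.Δ)⁻¹ = a := by group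
  rw [e]; exact ha

lemma tau_mem_simples {b : G} (hb : b ∈ S.Simples) : S.Δ⁻¹ * b * S.Δ ∈ S.Simples := by
  refine ⟨S.conj_pos b hb.1, ?_⟩
  have h := S.conj_pos _ hb.2
  have e : (S.Δ⁻¹ * b * S.Δ)⁻¹ * S.Δ = S.Δ⁻¹ * (b⁻¹ * S.Δ) * S.Δ := by group
  rw [e]; exact h

lemma tauInv_mem_simples {b : G} (hb : b ∈ S.Simples) : S.Δ * b * S.Δ⁻¹ ∈ S.Simples := by
  have h2 := S.deltaInv_mem (S.deltaInv_mem hb)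
  have e : S.Δ * (S.Δ * b⁻¹)⁻¹ = S.Δ * b * S.Δ⁻¹ := by group
  rw [e] at h2; exact h2

lemma M_le_P {q : G} (hq : q ∈ S.M) : q ∈ S.P :=
  (Submonoid.closure_le.mpr (fun _ ha => ha.1) : S.M ≤ S.P) hq

lemma tau_mem_M {q : G} (hq : q ∈ S.M) : S.Δ⁻¹ * q * S.Δ ∈ S.M := by
  induction hq using Submonoid.closure_induction with
  | mem x hx => exact Submonoid.subset_closure (S.tau_mem_simples hx)
  | one =>
    have e : S.Δ⁻¹ * 1 * S.Δ = (1 : G) := by group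
    rw [e]; exact one_mem _
  | mul x y hx hy ihx ihy =>
    have e : S.Δ⁻¹ * (x * y) * S.Δ = (S.Δ⁻¹ * x * S.Δ) * (S.Δ⁻¹ * y * S.Δ) := by group
    rw [e]; exact mul_mem ihx ihy

lemma tauInv_mem_M {q : G} (hq : q ∈ S.M) : S.Δ * q * S.Δ⁻¹ ∈ S.M := by
  induction hq using Submonoid.closure_induction with
  | mem x hx => exact Submonoid.subset_closure (S.tauInv_mem_simples hx)
  | one =>
    have e : S.Δ * 1 * S.Δ⁻¹ = (1 : G) := by group
    rw [e]; exact one_mem _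
  | mul x y hx hy ihx ihy =>
    have e : S.Δ * (x * y) * S.Δ⁻¹ = (S.Δ * x * S.Δ⁻¹) * (S.Δ * y * S.Δ⁻¹) := by group
    rw [e]; exact mul_mem ihx ihy

lemma tau_pow_mem_M (m : ℕ) {q : G} (hq : q ∈ S.M) : (S.Δ ^ m)⁻¹ * q * S.Δ ^ m ∈ S.M := by
  induction m with
  | zero => simpa using hq
  | succ n ih =>
    have e : (S.Δ ^ (n + 1))⁻¹ * q * S.Δ ^ (n + 1)
        = S.Δ⁻¹ * ((S.Δ ^ n)⁻¹ * q * S.Δ ^ n) * S.Δ := by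
      rw [pow_succ]; group
    rw [e]; exact S.tau_mem_M ih

lemma tauInv_pow_mem_M (m : ℕ) {q : G} (hq : q ∈ S.M) : S.Δ ^ m * q * (S.Δ ^ m)⁻¹ ∈ S.M := by
  induction m with
  | zero => simpa using hq
  | succ n ih =>
    have e : S.Δ ^ (n + 1) * q * (S.Δ ^ (n + 1))⁻¹
        = S.Δ * (S.Δ ^ n * q * (S.Δ ^ n)⁻¹) * S.Δ⁻¹ := by
      rw [pow_succ]; group
    rw [e]; exact S.tauInv_mem_M ih

lemma rgcd_le_left (a b : G) : a * (S.rgcd a b)⁻¹ ∈ S.P := by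
  have h := S.le_vee_left a⁻¹ b⁻¹
  have e : a * (S.rgcd a b)⁻¹ = (a⁻¹)⁻¹ * S.vee a⁻¹ b⁻¹ := by simp only [rgcd]; group
  rw [e]; exact h

lemma rgcd_le_right (a b : G) : b * (S.rgcd a b)⁻¹ ∈ S.P := by
  have h := S.le_vee_right a⁻¹ b⁻¹
  have e : b * (S.rgcd a b)⁻¹ = (b⁻¹)⁻¹ * S.vee a⁻¹ b⁻¹ := by simp only [rgcd]; group
  rw [e]; exact h

lemma le_rgcd {a b t : G} (ha : a * t⁻¹ ∈ S.P) (hb : b * t⁻¹ ∈ S.P) :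
    S.rgcd a b * t⁻¹ ∈ S.P := by
  have h := S.vee_le a⁻¹ b⁻¹ t⁻¹ (by rw [show (a⁻¹)⁻¹ * t⁻¹ = a * t⁻¹ by group]; exact ha)
    (by rw [show (b⁻¹)⁻¹ * t⁻¹ = b * t⁻¹ by group]; exact hb)
  have e : S.rgcd a b * t⁻¹ = (S.vee a⁻¹ b⁻¹)⁻¹ * t⁻¹ := by simp only [rgcd]
  rw [e]; exact h

lemma rlcm_mul_inv_left (a b : G) : S.rlcm a b * a⁻¹ ∈ S.P := by
  have h := S.wedge_le_left a⁻¹ b⁻¹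
  simpa only [rlcm] using h

lemma rlcm_mul_inv_right (a b : G) : S.rlcm a b * b⁻¹ ∈ S.P := by
  have h := S.wedge_le_right a⁻¹ b⁻¹
  simpa only [rlcm] using h

lemma rlcm_le {a b c : G} (ha : c * a⁻¹ ∈ S.P) (hb : c * b⁻¹ ∈ S.P) :
    c * (S.rlcm a b)⁻¹ ∈ S.P := by
  have h := S.le_wedge a⁻¹ b⁻¹ c⁻¹
    (by rw [show (c⁻¹)⁻¹ * a⁻¹ = c * a⁻¹ by group]; exact ha)
    (by rw [show (c⁻¹)⁻¹ * b⁻¹ = c * b⁻¹ by group]; exact hb)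
  have e : c * (S.rlcm a b)⁻¹ = (c⁻¹)⁻¹ * S.wedge a⁻¹ b⁻¹ := by simp only [rlcm]; group
  rw [e]; exact h

lemma simple_of_rdvd {p : G} (hp : p ∈ S.P) (h : S.Δ * p⁻¹ ∈ S.P) : p ∈ S.Simples := by
  have hb : S.Δ * p⁻¹ ∈ S.Simples := by
    refine ⟨h, ?_⟩
    have e : (S.Δ * p⁻¹)⁻¹ * S.Δ = p := by group
    rw [e]; exact hp
  have h2 := S.dd_mem hb
  have e : (S.Δ * p⁻¹)⁻¹ * S.Δ = p := by group
  rwa [e] at h2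

lemma rD {u v t : G} (hu : u ∈ S.P) (hv : v ∈ S.Simples)
    (ht1 : S.Δ * t⁻¹ ∈ S.P) (ht2 : u * v * t⁻¹ ∈ S.P) :
    S.rgcd u S.Δ * v * t⁻¹ ∈ S.P := by
  have hLuv : u * v * (S.rlcm t v)⁻¹ ∈ S.P := S.rlcm_le ht2
    (by rw [show u * v * v⁻¹ = u by group]; exact hu)
  have hDv_t : S.Δ * v * t⁻¹ ∈ S.P := by
    have h1 : S.Δ * v * S.Δ⁻¹ ∈ S.P := (S.tauInv_mem_simples hv).1
    have e : S.Δ * v * t⁻¹ = (S.Δ * v * S.Δ⁻¹) * (S.Δ * t⁻¹) := by group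
    rw [e]; exact mul_mem h1 ht1
  have hDv_L : S.Δ * v * (S.rlcm t v)⁻¹ ∈ S.P := S.rlcm_le hDv_t
    (by rw [show S.Δ * v * v⁻¹ = S.Δ by group]; exact S.delta_mem)
  have h1 : u * (S.rlcm t v * v⁻¹)⁻¹ ∈ S.P := by
    have e : u * (S.rlcm t v * v⁻¹)⁻¹ = u * v * (S.rlcm t v)⁻¹ := by group
    rw [e]; exact hLuv
  have h2 : S.Δ * (S.rlcm t v * v⁻¹)⁻¹ ∈ S.P := by
    have e : S.Δ * (S.rlcm t v * v⁻¹)⁻¹ = S.Δ * v * (S.rlcm t v)⁻¹ := by group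
    rw [e]; exact hDv_L
  have h3 : S.rgcd u S.Δ * (S.rlcm t v * v⁻¹)⁻¹ ∈ S.P := S.le_rgcd h1 h2
  have h4 : S.rlcm t v * t⁻¹ ∈ S.P := S.rlcm_mul_inv_left t v
  have e : S.rgcd u S.Δ * v * t⁻¹
      = (S.rgcd u S.Δ * (S.rlcm t v * v⁻¹)⁻¹) * (S.rlcm t v * t⁻¹) := by group
  rw [e]; exact mul_mem h3 h4

lemma claimS : ∀ l : List G, (∀ s ∈ l, s ∈ S.Simples) →
    l.prod * (S.rgcd l.prod S.Δ)⁻¹ ∈ S.M := by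
  intro l
  induction l using List.reverseRecOn with
  | nil =>
    intro _
    have h1 : S.rgcd (1 : G) S.Δ * (1 : G)⁻¹ ∈ S.P :=
      S.le_rgcd (by simpa using one_mem S.P) (by simpa using S.delta_mem)
    have h2 : (1 : G) * (S.rgcd 1 S.Δ)⁻¹ ∈ S.P := S.rgcd_le_left 1 S.Δ
    have ht : S.rgcd (1 : G) S.Δ = 1 :=
      S.purity _ (by simpa using h1) (by simpa using h2)
    simp only [List.prod_nil, ht]
    simpa using one_mem S.M
  | append_singleton l' v ih =>
    intro hall
    have hv : v ∈ S.Simples := hall v (by simp)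
    have hl' : ∀ s ∈ l', s ∈ S.Simples := fun s hs => hall s (by simp [hs])
    have huM : l'.prod ∈ S.M :=
      list_prod_mem (fun s hs => Submonoid.subset_closure (hl' s hs))
    have huP : l'.prod ∈ S.P := S.M_le_P huM
    have hq : (l' ++ [v]).prod = l'.prod * v := by simp
    rw [hq]
    have ht1 : S.Δ * (S.rgcd (l'.prod * v) S.Δ)⁻¹ ∈ S.P := S.rgcd_le_right _ _
    have ht2 : l'.prod * v * (S.rgcd (l'.prod * v) S.Δ)⁻¹ ∈ S.P := S.rgcd_le_left _ _
    have hrD : S.rgcd l'.prod S.Δ * v * (S.rgcd (l'.prod * v) S.Δ)⁻¹ ∈ S.P :=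
      S.rD huP hv ht1 ht2
    have hu1P : S.rgcd l'.prod S.Δ ∈ S.P := by
      have h := S.le_rgcd (a := l'.prod) (b := S.Δ) (t := 1)
        (by simpa using huP) (by simpa using S.delta_mem)
      simpa using h
    have hu1S : S.rgcd l'.prod S.Δ ∈ S.Simples :=
      S.simple_of_rdvd hu1P (S.rgcd_le_right _ _)
    have hvt : S.rgcd (l'.prod * v) S.Δ * v⁻¹ ∈ S.P := by
      apply S.le_rgcd
      · have e : l'.prod * v * v⁻¹ = l'.prod := by group
        rw [e]; exact huP
      · exact (S.deltaInv_mem hv).1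
    have hz : S.rgcd l'.prod S.Δ * v * (S.rgcd (l'.prod * v) S.Δ)⁻¹ ∈ S.Simples := by
      refine ⟨hrD, ?_⟩
      have e : (S.rgcd l'.prod S.Δ * v * (S.rgcd (l'.prod * v) S.Δ)⁻¹)⁻¹ * S.Δ
          = (S.rgcd (l'.prod * v) S.Δ * v⁻¹) * ((S.rgcd l'.prod S.Δ)⁻¹ * S.Δ) := by group
      rw [e]; exact mul_mem hvt hu1S.2
    have e2 : l'.prod * v * (S.rgcd (l'.prod * v) S.Δ)⁻¹
        = (l'.prod * (S.rgcd l'.prod S.Δ)⁻¹)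
          * (S.rgcd l'.prod S.Δ * v * (S.rgcd (l'.prod * v) S.Δ)⁻¹) := by group
    rw [e2]
    exact mul_mem (ih hl') (Submonoid.subset_closure hz)

lemma crux {q : G} (hq : q ∈ S.M) (h : q * S.Δ⁻¹ ∈ S.P) : q * S.Δ⁻¹ ∈ S.M := by
  obtain ⟨l, hl, hlp⟩ := Submonoid.exists_list_of_mem_closure hq
  have hS := S.claimS l hl
  rw [hlp] at hS
  have h1 : S.rgcd q S.Δ * S.Δ⁻¹ ∈ S.P :=
    S.le_rgcd h (by simpa using one_mem S.P)
  have h2 : S.Δ * (S.rgcd q S.Δ)⁻¹ ∈ S.P := S.rgcd_le_right q S.Δ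
  have h3 : S.rgcd q S.Δ = S.Δ := by
    have h4 := S.purity _ h2 (by
      have e : (S.Δ * (S.rgcd q S.Δ)⁻¹)⁻¹ = S.rgcd q S.Δ * S.Δ⁻¹ := by group
      rw [e]; exact h1)
    exact (mul_inv_eq_one.mp h4).symm
  rw [← h3]
  exact hS

lemma inv_rep {q : G} (hq : q ∈ S.M) : ∃ q' ∈ S.M, ∃ r : ℕ, q⁻¹ = q' * (S.Δ ^ r)⁻¹ := by
  induction hq using Submonoid.closure_induction with
  | mem x hx =>
    refine ⟨x⁻¹ * S.Δ, Submonoid.subset_closure (S.dd_mem hx), 1, ?_⟩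
    rw [pow_one]; group
  | one => exact ⟨1, one_mem _, 0, by simp⟩
  | mul x y hx hy ihx ihy =>
    obtain ⟨qx, hqx, rx, ex⟩ := ihx
    obtain ⟨qy, hqy, ry, ey⟩ := ihy
    refine ⟨qy * ((S.Δ ^ ry)⁻¹ * qx * S.Δ ^ ry), mul_mem hqy (S.tau_pow_mem_M ry hqx),
      ry + rx, ?_⟩
    rw [mul_inv_rev, ex, ey, pow_add]; group

lemma delta_mem_M : S.Δ ∈ S.M :=
  Submonoid.subset_closure ⟨S.delta_mem, by rw [inv_mul_cancel]; exact one_mem _⟩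

lemma rep (g : G) : ∃ q ∈ S.M, ∃ m : ℕ, g = q * (S.Δ ^ m)⁻¹ := by
  have hg : g ∈ Subgroup.closure {a : G | a ∈ S.P ∧ a⁻¹ * S.Δ ∈ S.P} := by
    rw [S.simples_generate]; trivial
  induction hg using Subgroup.closure_induction with
  | mem x hx => exact ⟨x, Submonoid.subset_closure hx, 0, by simp⟩
  | one => exact ⟨1, one_mem _, 0, by simp⟩
  | mul x y hx hy ihx ihy =>
    obtain ⟨qx, hqx, mx, ex⟩ := ihx
    obtain ⟨qy, hqy, my, ey⟩ := ihy
    refine ⟨qx * ((S.Δ ^ mx)⁻¹ * qy * S.Δ ^ mx), mul_mem hqx (S.tau_pow_mem_M mx hqy),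
      mx + my, ?_⟩
    rw [ex, ey, pow_add]; group
  | inv x hx ihx =>
    obtain ⟨qx, hqx, mx, ex⟩ := ihx
    obtain ⟨q', hq', r, er⟩ := S.inv_rep hqx
    by_cases hmr : mx ≤ r
    · refine ⟨S.Δ ^ mx * q' * (S.Δ ^ mx)⁻¹, S.tauInv_pow_mem_M mx hq', r - mx, ?_⟩
      obtain ⟨d, rfl⟩ : ∃ d, r = mx + d := ⟨r - mx, by omega⟩
      rw [ex, mul_inv_rev, er]
      simp only [Nat.add_sub_cancel_left]
      rw [pow_add]; group
    · refine ⟨S.Δ ^ mx * q' * (S.Δ ^ mx)⁻¹ * S.Δ ^ (mx - r),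
        mul_mem (S.tauInv_pow_mem_M mx hq') (pow_mem S.delta_mem_M _), 0, ?_⟩
      obtain ⟨d, rfl⟩ : ∃ d, mx = r + d := ⟨mx - r, by omega⟩
      rw [ex, mul_inv_rev, er]
      simp only [Nat.add_sub_cancel_left]
      rw [pow_add]; group

lemma P_le_M {p : G} (hp : p ∈ S.P) : p ∈ S.M := by
  have aux : ∀ (m : ℕ) (q : G), q ∈ S.M → q * (S.Δ ^ m)⁻¹ ∈ S.P → q * (S.Δ ^ m)⁻¹ ∈ S.M := by
    intro m
    induction m with
    | zero => intro q hq _; simpa using hq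
    | succ n ihn =>
      intro q hq hP
      have h1 : q * S.Δ⁻¹ ∈ S.P := by
        have e : q * S.Δ⁻¹ = (q * (S.Δ ^ (n + 1))⁻¹) * S.Δ ^ n := by rw [pow_succ]; group
        rw [e]; exact mul_mem hP (pow_mem S.delta_mem n)
      have h2 : q * S.Δ⁻¹ ∈ S.M := S.crux hq h1
      have e2 : q * (S.Δ ^ (n + 1))⁻¹ = (q * S.Δ⁻¹) * (S.Δ ^ n)⁻¹ := by rw [pow_succ]; group
      rw [e2] at hP ⊢
      exact ihn _ h2 hP
  obtain ⟨q, hq, m, he⟩ := S.rep p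
  rw [he] at hp ⊢
  exact aux m q hq hp

lemma tauInv_mem_P {p : G} (hp : p ∈ S.P) : S.Δ * p * S.Δ⁻¹ ∈ S.P :=
  S.M_le_P (S.tauInv_mem_M (S.P_le_M hp))

lemma conj_zpow_mem (k : ℤ) {p : G} (hp : p ∈ S.P) : S.Δ ^ k * p * (S.Δ ^ k)⁻¹ ∈ S.P := by
  induction k using Int.induction_on with
  | zero => simpa using hp
  | succ n ih =>
    have e : S.Δ ^ ((n : ℤ) + 1) * p * (S.Δ ^ ((n : ℤ) + 1))⁻¹
        = S.Δ * (S.Δ ^ (n : ℤ) * p * (S.Δ ^ (n : ℤ))⁻¹) * S.Δ⁻¹ := by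
      rw [zpow_add_one]; group
    rw [e]; exact S.tauInv_mem_P ih
  | pred n ih =>
    have e : S.Δ ^ (-(n : ℤ) - 1) * p * (S.Δ ^ (-(n : ℤ) - 1))⁻¹
        = S.Δ⁻¹ * (S.Δ ^ (-(n : ℤ)) * p * (S.Δ ^ (-(n : ℤ)))⁻¹) * S.Δ := by
      rw [zpow_sub_one]; group
    rw [e]; exact S.conj_pos _ ih

lemma inf_inv (x : G) : S.inf x⁻¹ = -S.sup x := by
  have h1 : -S.sup x ≤ S.inf x⁻¹ := by
    apply S.inf_max
    have h := S.conj_zpow_mem (S.sup x) (S.le_sup x)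
    have e : (S.Δ ^ (-S.sup x))⁻¹ * x⁻¹
        = S.Δ ^ S.sup x * (x⁻¹ * S.Δ ^ S.sup x) * (S.Δ ^ S.sup x)⁻¹ := by
      rw [zpow_neg]; group
    rw [e]; exact h
  have h2 : S.sup x ≤ -S.inf x⁻¹ := by
    apply S.sup_min
    have h := S.conj_zpow_mem (S.inf x⁻¹) (S.inf_le x⁻¹)
    have e : x⁻¹ * S.Δ ^ (-S.inf x⁻¹)
        = S.Δ ^ S.inf x⁻¹ * ((S.Δ ^ S.inf x⁻¹)⁻¹ * x⁻¹) * (S.Δ ^ S.inf x⁻¹)⁻¹ := by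
      rw [zpow_neg]; group
    rw [e]; exact h
  omega

lemma wedge_eq_of {a b c : G} (h1 : c⁻¹ * a ∈ S.P) (h2 : c⁻¹ * b ∈ S.P)
    (h3 : ∀ d : G, d⁻¹ * a ∈ S.P → d⁻¹ * b ∈ S.P → d⁻¹ * c ∈ S.P) :
    S.wedge a b = c :=
  S.eq_of_le_le (h3 _ (S.wedge_le_left a b) (S.wedge_le_right a b)) (S.le_wedge a b c h1 h2)

lemma mul_wedge (c a b : G) : c * S.wedge a b = S.wedge (c * a) (c * b) := by
  symm
  apply S.wedge_eq_of
  · have h := S.wedge_le_left a b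
    have e : (c * S.wedge a b)⁻¹ * (c * a) = (S.wedge a b)⁻¹ * a := by group
    rw [e]; exact h
  · have h := S.wedge_le_right a b
    have e : (c * S.wedge a b)⁻¹ * (c * b) = (S.wedge a b)⁻¹ * b := by group
    rw [e]; exact h
  · intro d hd1 hd2
    have h := S.le_wedge a b (c⁻¹ * d)
      (by have e : (c⁻¹ * d)⁻¹ * a = d⁻¹ * (c * a) := by group
          rw [e]; exact hd1)
      (by have e : (c⁻¹ * d)⁻¹ * b = d⁻¹ * (c * b) := by group
          rw [e]; exact hd2)
    have e : d⁻¹ * (c * S.wedge a b) = (c⁻¹ * d)⁻¹ * S.wedge a b := by group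
    rw [e]; exact h

lemma wedge_mul_delta (a b : G) : S.wedge a b * S.Δ = S.wedge (a * S.Δ) (b * S.Δ) := by
  symm
  apply S.wedge_eq_of
  · have h := S.conj_pos _ (S.wedge_le_left a b)
    have e : (S.wedge a b * S.Δ)⁻¹ * (a * S.Δ) = S.Δ⁻¹ * ((S.wedge a b)⁻¹ * a) * S.Δ := by group
    rw [e]; exact h
  · have h := S.conj_pos _ (S.wedge_le_right a b)
    have e : (S.wedge a b * S.Δ)⁻¹ * (b * S.Δ) = S.Δ⁻¹ * ((S.wedge a b)⁻¹ * b) * S.Δ := by group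
    rw [e]; exact h
  · intro d hd1 hd2
    have h1 : (d * S.Δ⁻¹)⁻¹ * a ∈ S.P := by
      have h := S.tauInv_mem_P hd1
      have e : (d * S.Δ⁻¹)⁻¹ * a = S.Δ * (d⁻¹ * (a * S.Δ)) * S.Δ⁻¹ := by group
      rw [e]; exact h
    have h2 : (d * S.Δ⁻¹)⁻¹ * b ∈ S.P := by
      have h := S.tauInv_mem_P hd2
      have e : (d * S.Δ⁻¹)⁻¹ * b = S.Δ * (d⁻¹ * (b * S.Δ)) * S.Δ⁻¹ := by group
      rw [e]; exact h
    have h := S.le_wedge a b (d * S.Δ⁻¹) h1 h2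
    have e : d⁻¹ * (S.wedge a b * S.Δ) = S.Δ⁻¹ * ((d * S.Δ⁻¹)⁻¹ * S.wedge a b) * S.Δ := by group
    rw [e]; exact S.conj_pos _ h

lemma iota_inv_eq (x : G) : S.iota x⁻¹ = (S.phi x)⁻¹ * S.Δ := by
  have e0 : S.iota x⁻¹ = S.wedge (x⁻¹ * S.Δ ^ S.sup x) S.Δ := by
    simp only [iota]
    rw [S.inf_inv x, neg_neg]
  rw [e0]
  simp only [phi]
  have e1 : ((S.wedge (S.Δ ^ (S.sup x - 1)) x)⁻¹ * x)⁻¹ * S.Δ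
      = x⁻¹ * S.wedge (S.Δ ^ (S.sup x - 1)) x * S.Δ := by group
  rw [e1]
  rw [S.mul_wedge x⁻¹ (S.Δ ^ (S.sup x - 1)) x]
  rw [inv_mul_cancel]
  rw [S.wedge_mul_delta]
  congr 1
  · rw [mul_assoc, ← zpow_add_one, Int.sub_add_cancel]
  · rw [one_mul]

lemma wedge_eq_left_iff (a b : G) : S.wedge a b = a ↔ a⁻¹ * b ∈ S.P := by
  constructor
  · intro h
    have h2 := S.wedge_le_right a b
    rwa [h] at h2
  · intro h
    exact S.eq_of_le_le (S.wedge_le_left a b)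
      (S.le_wedge a b a (by rw [inv_mul_cancel]; exact one_mem _) h)

lemma wedge_eq_right_iff (a b : G) : S.wedge a b = b ↔ b⁻¹ * a ∈ S.P := by
  constructor
  · intro h
    have h2 := S.wedge_le_left a b
    rwa [h] at h2
  · intro h
    exact S.eq_of_le_le (S.wedge_le_right a b)
      (S.le_wedge a b b h (by rw [inv_mul_cancel]; exact one_mem _))

end Garside


open Garside in
theorem statement2 {G : Type*} [Group G] (S : Garside G) (x : G) :
    ((S.le (S.phi x * S.iota x) S.Δ ↔ S.pp x = S.iota x) ∧
      (S.le (S.phi x * S.iota x) S.Δ → S.sl x = S.cyc x)) ∧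
    ((S.le S.Δ (S.phi x * S.iota x) ↔
        S.pp x = S.iota x⁻¹ ∧ S.iota x⁻¹ = (S.phi x)⁻¹ * S.Δ) ∧
      (S.le S.Δ (S.phi x * S.iota x) → S.sl x = S.tau (S.dec x))) := by
  have hID := S.iota_inv_eq x
  have key1 : S.le (S.phi x * S.iota x) S.Δ ↔ S.pp x = S.iota x := by
    simp only [Garside.le, Garside.pp]
    rw [S.wedge_eq_left_iff]
    have e : (S.phi x * S.iota x)⁻¹ * S.Δ = (S.iota x)⁻¹ * S.iota x⁻¹ := by
      rw [hID]; group
    rw [e]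
  have key2 : S.le S.Δ (S.phi x * S.iota x) ↔
      (S.pp x = S.iota x⁻¹ ∧ S.iota x⁻¹ = (S.phi x)⁻¹ * S.Δ) := by
    simp only [Garside.le, Garside.pp]
    constructor
    · intro h
      refine ⟨?_, hID⟩
      rw [S.wedge_eq_right_iff]
      have e : (S.iota x⁻¹)⁻¹ * S.iota x = S.Δ⁻¹ * (S.phi x * S.iota x) := by
        rw [hID]; group
      rw [e]; exact h
    · rintro ⟨h1, -⟩
      have h2 := (S.wedge_eq_right_iff _ _).mp h1
      have e : S.Δ⁻¹ * (S.phi x * S.iota x) = (S.iota x⁻¹)⁻¹ * S.iota x := by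
        rw [hID]; group
      rw [e]; exact h2
  refine ⟨⟨key1, fun h => ?_⟩, ⟨key2, fun h => ?_⟩⟩
  · have hp := key1.mp h
    unfold Garside.sl Garside.cyc
    rw [hp]
  · obtain ⟨h1, h2⟩ := key2.mp h
    unfold Garside.sl Garside.tau Garside.dec
    rw [h1, h2]
    group


end GarsidePaper
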